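/- Let (X,d) be a compact ultrametric space and f : X → X a local radial contraction. Then there exists a finite partition of X into open balls B_0,...,B_{n-1} such that each B_i is f-contractive: there is α_i ∈ (0,1) with d(f(x), f(u)) ≤ α_i·d(x,u) for all x,u ∈ B_i (where x is the center). -/

import Mathlib

open Metric

/-- In an ultrametric space, a ball of smaller radius meeting a ball of larger
radius is contained in it. -/
lemma ball_subset_of_not_disjoint {X : Type*} [MetricSpace X]
    (hU : ∀ x y z : X, dist x y ≤ max (dist x z) (dist z y))
    {z y : X} {rz ry : ℝ} (hle : rz ≤ ry)
    (h : ¬ Disjoint (Metric.ball z rz) (Metric.ball y ry)) :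
    Metric.ball z rz ⊆ Metric.ball y ry := by
  obtain ⟨w, hwz, hwy⟩ := Set.not_disjoint_iff.mp h
  intro u hu
  rw [Metric.mem_ball] at *
  have h1 : dist u y ≤ max (dist u w) (dist w y) := hU u y w
  have h2 : dist u w ≤ max (dist u z) (dist z w) := hU u w z
  have hzw : dist z w < rz := by rwa [dist_comm] at hwz
  have huw : dist u w < ry := lt_of_le_of_lt h2 (max_lt (lt_of_lt_of_le hu hle)
    (lt_of_lt_of_le hzw hle))
  exact lt_of_le_of_lt h1 (max_lt huw hwy)

/-- Pruning a finite family of ultrametric balls to a disjoint subfamily with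
the same union. -/
lemma prune_balls {X : Type*} [MetricSpace X]
    (hU : ∀ x y z : X, dist x y ≤ max (dist x z) (dist z y))
    (r : X → ℝ) :
    ∀ t : Finset X, ∃ u ⊆ t,
      (⋃ y ∈ u, Metric.ball y (r y)) = (⋃ y ∈ t, Metric.ball y (r y)) ∧
      (↑u : Set X).Pairwise (Function.onFun Disjoint fun y => Metric.ball y (r y)) := by
  classical
  intro t
  induction t using Finset.strongInductionOn with
  | _ t ih =>
    rcases t.eq_empty_or_nonempty with rfl | ht
    · exact ⟨∅, Finset.Subset.refl _, rfl, by simp⟩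
    · obtain ⟨y, hyt, hmax⟩ := t.exists_max_image r ht
      set B : X → Set X := fun z => Metric.ball z (r z) with hB
      set t₁ : Finset X := (t.erase y).filter (fun z => Disjoint (B z) (B y)) with ht₁
      have ht₁t : t₁ ⊂ t := by
        refine Finset.ssubset_iff_of_subset ?_ |>.mpr ⟨y, hyt, ?_⟩
        · exact (Finset.filter_subset _ _).trans (t.erase_subset y)
        · intro hy
          exact absurd (Finset.mem_of_mem_filter y hy) (t.notMem_erase y)
      obtain ⟨u₁, hu₁sub, hu₁union, hu₁pair⟩ := ih t₁ ht₁t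
      refine ⟨insert y u₁, ?_, ?_, ?_⟩
      · intro z hz
        rcases Finset.mem_insert.mp hz with rfl | hz
        · exact hyt
        · exact (ht₁t.subset) (hu₁sub hz)
      · apply Set.Subset.antisymm
        · refine Set.iUnion₂_subset fun z hz => ?_
          rcases Finset.mem_insert.mp hz with rfl | hz
          · exact fun x hx => Set.mem_biUnion hyt hx
          · exact fun x hx => Set.mem_biUnion ((ht₁t.subset) (hu₁sub hz)) hx
        · refine Set.iUnion₂_subset fun z hz => ?_
          by_cases hzy : z = y
          · subst hzy
            exact fun x hx => Set.mem_biUnion (Finset.mem_insert_self _ u₁) hx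
          by_cases hd : Disjoint (B z) (B y)
          · have hz₁ : z ∈ t₁ := Finset.mem_filter.mpr ⟨Finset.mem_erase.mpr ⟨hzy, hz⟩, hd⟩
            have : B z ⊆ ⋃ w ∈ t₁, B w := fun x hx => Set.mem_biUnion hz₁ hx
            refine this.trans ?_
            rw [← hu₁union]
            refine Set.iUnion₂_subset fun w hw => ?_
            exact fun x hx => Set.mem_biUnion (Finset.mem_insert_of_mem hw) hx
          · have hsub : B z ⊆ B y :=
              ball_subset_of_not_disjoint hU (hmax z hz) hd
            exact hsub.trans (fun x hx => Set.mem_biUnion (Finset.mem_insert_self y u₁) hx)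
      · rw [Finset.coe_insert]
        haveI : Std.Symm (Function.onFun Disjoint B) := ⟨fun a b hab => hab.symm⟩
        refine Set.pairwise_insert_of_symmetric |>.mpr
          ⟨hu₁pair, fun z hz hzy => ?_⟩
        have hz₁ : z ∈ t₁ := hu₁sub hz
        exact ((Finset.mem_filter.mp hz₁).2).symm

theorem stmt_9 {X : Type*} [MetricSpace X] [CompactSpace X]
    (hU : ∀ x y z : X, dist x y ≤ max (dist x z) (dist z y))
    (f : X → X)
    (hlrc : ∀ x : X, ∃ N ∈ nhds x, ∃ α ∈ Set.Ioo (0 : ℝ) 1,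
      ∀ u ∈ N, dist (f x) (f u) ≤ α * dist x u) :
    ∃ (n : ℕ) (c : Fin n → X) (r : Fin n → ℝ) (α : Fin n → ℝ),
      (⋃ i, Metric.ball (c i) (r i)) = Set.univ ∧
      Pairwise (Function.onFun Disjoint (fun i => Metric.ball (c i) (r i))) ∧
      ∀ i, α i ∈ Set.Ioo (0 : ℝ) 1 ∧
        ∀ u ∈ Metric.ball (c i) (r i), dist (f (c i)) (f u) ≤ α i * dist (c i) u := by
  classical
  have key : ∀ x : X, ∃ r > (0:ℝ), ∃ α ∈ Set.Ioo (0:ℝ) 1,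
      ∀ u ∈ Metric.ball x r, dist (f x) (f u) ≤ α * dist x u := by
    intro x
    obtain ⟨N, hN, α, hα, hc⟩ := hlrc x
    obtain ⟨r, hr, hball⟩ := Metric.mem_nhds_iff.mp hN
    exact ⟨r, hr, α, hα, fun u hu => hc u (hball hu)⟩
  choose r hr α hα hcontr using key
  -- finite subcover
  have hcover : (Set.univ : Set X) ⊆ ⋃ x : X, Metric.ball x (r x) := by
    intro x _
    exact Set.mem_iUnion.mpr ⟨x, Metric.mem_ball_self (hr x)⟩
  obtain ⟨t, ht⟩ := isCompact_univ.elim_finite_subcover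
    (fun x : X => Metric.ball x (r x)) (fun x => Metric.isOpen_ball) hcover
  obtain ⟨u, hut, huunion, hupair⟩ := prune_balls hU r t
  -- the pruned family still covers
  have hcov : (⋃ y ∈ u, Metric.ball y (r y)) = Set.univ := by
    apply Set.eq_univ_of_univ_subset
    rw [huunion]
    exact ht
  refine ⟨u.card, fun i => (u.equivFin.symm i : X), fun i => r (u.equivFin.symm i : X),
    fun i => α (u.equivFin.symm i : X), ?_, ?_, ?_⟩
  · rw [← hcov]
    apply Set.Subset.antisymm
    · refine Set.iUnion_subset fun i => ?_
      intro x hx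
      exact Set.mem_biUnion (u.equivFin.symm i).2 hx
    · refine Set.iUnion₂_subset fun y hy => ?_
      have : y = ((u.equivFin.symm (u.equivFin ⟨y, hy⟩)) : X) := by simp
      rw [this]
      exact Set.subset_iUnion (fun i => Metric.ball ((u.equivFin.symm i : X))
        (r (u.equivFin.symm i : X))) (u.equivFin ⟨y, hy⟩)
  · intro i j hij
    have hne : ((u.equivFin.symm i : X)) ≠ ((u.equivFin.symm j : X)) := by
      intro h
      apply hij
      have := Subtype.val_injective h
      exact u.equivFin.symm.injective this |>.symm ▸ rfl
    exact hupair (u.equivFin.symm i).2 (u.equivFin.symm j).2 hne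
  · intro i
    exact ⟨hα _, hcontr _⟩
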